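/- Let $A$ be a ring offering elements $h_{st}$ for $1 \leq s < t \leq m$ ($m > 2$) with $h_{rs} h_{s,s+1} = h_{r,s+1}$ for all $r < s < m$. Define $S_m = \sum_{(k_1,\dots,k_r) \in I_{1m}} (-1)^r (1 - h_{k_1,k_1+1}) \cdots (1 - h_{k_{r-1},k_{r-1}+1})$. Then $S_m = h_{2m} - h_{1m}$. -/

import Mathlib

/-- A chain `(k_1, …, k_r) ∈ I_{1m}` is encoded by the finite set `S ⊆ (1, m)` of its
interior entries; its length is `r = S.card + 2`, and the entries `k_1, …, k_{r-1}`
form the list `1 :: S.sort (· ≤ ·)`. -/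
def chainList (i j : ℕ) (S : Finset ℕ) : List ℕ := i :: (S.sort (· ≤ ·) ++ [j])

lemma sort_insert_max (m : ℕ) (S : Finset ℕ) (hS : ∀ x ∈ S, x < m) :
    (insert m S).sort (· ≤ ·) = S.sort (· ≤ ·) ++ [m] := by
  have hm : m ∉ S := fun hmem => lt_irrefl m (hS m hmem)
  haveI : IsAntisymm ℕ (· ≤ ·) := ⟨fun a b => le_antisymm⟩
  refine (fun p s1 s2 => List.Perm.eq_of_pairwise' s1 s2 p) ?_ (Finset.pairwise_sort _ _) ?_
  · have p1 : ((insert m S).sort (· ≤ ·)).Perm (insert m S).toList :=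
      Finset.sort_perm_toList _ _
    have p2 : ((insert m S).toList).Perm (m :: S.toList) := Finset.toList_insert hm
    have p3 : (m :: S.toList).Perm (m :: S.sort (· ≤ ·)) :=
      ((Finset.sort_perm_toList _ _).symm).cons m
    have p4 : (m :: S.sort (· ≤ ·)).Perm (S.sort (· ≤ ·) ++ [m]) := by
      simpa using (List.perm_append_comm (l₁ := [m]) (l₂ := S.sort (· ≤ ·)))
    exact p1.trans (p2.trans (p3.trans p4))
  · rw [List.pairwise_append]
    refine ⟨Finset.pairwise_sort _ _, List.pairwise_singleton _ _, ?_⟩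
    intro x hx y hy
    simp only [List.mem_singleton] at hy
    subst hy
    exact (hS x ((Finset.mem_sort _).mp hx)).le

/-- Let `A` be a ring, `m > 2`, and `h_{st} ∈ A` (`1 ≤ s < t ≤ m`)
with `h_{rs} h_{s,s+1} = h_{r,s+1}` for all `r < s < m`.  Then
`S_m = ∑_{(k_1,…,k_r) ∈ I_{1m}} (-1)^r (1 - h_{k_1,k_1+1}) ⋯ (1 - h_{k_{r-1},k_{r-1}+1})
     = h_{2m} - h_{1m}`. -/
theorem stmt_3 {A : Type*} [Ring A] (m : ℕ) (hm : 2 < m) (h : ℕ → ℕ → A)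
    (hyp : ∀ r s, 1 ≤ r → r < s → s < m → h r s * h s (s + 1) = h r (s + 1)) :
    ∑ S ∈ (Finset.Ioo 1 m).powerset,
        (-1 : ℤ) ^ (S.card + 2) •
          ((1 :: S.sort (· ≤ ·)).map fun t => 1 - h t (t + 1)).prod
      = h 2 m - h 1 m := by
  induction m, hm using Nat.le_induction with
  | base =>
    have hset : (Finset.Ioo 1 3).powerset = {∅, {2}} := by decide
    rw [hset, Finset.sum_insert (by decide), Finset.sum_singleton]
    simp only [Finset.card_empty, Finset.sort_empty, Finset.card_singleton,
      Finset.sort_singleton, List.map_cons, List.map_nil, List.prod_cons, List.prod_nil,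
      zsmul_eq_mul]
    push_cast
    have e := hyp 1 2 le_rfl one_lt_two (by norm_num)
    norm_num at e ⊢
    rw [← e]
    noncomm_ring
  | succ m hm ih =>
    have ih' := ih (fun r s h1 h2 h3 => hyp r s h1 h2 (h3.trans (Nat.lt_succ_self m)))
    have hIoo : Finset.Ioo 1 (m + 1) = insert m (Finset.Ioo 1 m) := by
      ext x; simp [Finset.mem_Ioo]; omega
    have hmnot : m ∉ Finset.Ioo 1 m := by simp
    rw [hIoo, Finset.sum_powerset_insert hmnot]
    have key : ∀ S ∈ (Finset.Ioo 1 m).powerset,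
        (-1 : ℤ) ^ ((insert m S).card + 2) •
          ((1 :: (insert m S).sort (· ≤ ·)).map fun t => 1 - h t (t + 1)).prod
        = -(((-1 : ℤ) ^ (S.card + 2) •
          ((1 :: S.sort (· ≤ ·)).map fun t => 1 - h t (t + 1)).prod) * (1 - h m (m+1))) := by
      intro S hS
      have hSsub := Finset.mem_powerset.mp hS
      have hlt : ∀ x ∈ S, x < m := fun x hx => (Finset.mem_Ioo.mp (hSsub hx)).2
      have hmS : m ∉ S := fun hmem => lt_irrefl m (hlt m hmem)
      rw [Finset.card_insert_of_notMem hmS, sort_insert_max m S hlt]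
      rw [show (1 :: (S.sort (· ≤ ·) ++ [m])) = (1 :: S.sort (· ≤ ·)) ++ [m] from rfl]
      rw [List.map_append, List.prod_append]
      simp only [pow_succ, zsmul_eq_mul, List.map_cons, List.map_nil, List.prod_cons,
        List.prod_nil, mul_one, Int.cast_mul, Int.cast_neg, Int.cast_one, Int.cast_pow]
      noncomm_ring
    rw [Finset.sum_congr rfl key, Finset.sum_neg_distrib, ← Finset.sum_mul, ih']
    have e1 := hyp 1 m le_rfl (by omega) (Nat.lt_succ_self m)
    have e2 := hyp 2 m (by omega) (by omega) (Nat.lt_succ_self m)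
    rw [← e1, ← e2]
    noncomm_ring
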